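/- Let f be entire and non-constant, and suppose the affine map φ(z) = cz + b (c ≠ 0) satisfies f ∘ φ = f. Then |c| = 1. -/

import Mathlib

lemma aux18 (f : ℂ → ℂ) (hf : Differentiable ℂ f)
    (c b : ℂ) (hlt : ‖c‖ < 1)
    (haut : ∀ z : ℂ, f (c * z + b) = f z) :
    ∃ C : ℂ, ∀ w, f w = C := by
  have hc1 : c ≠ 1 := by
    intro h; rw [h] at hlt; simp at hlt
  set z₀ : ℂ := b / (1 - c) with hz₀
  have hfix : c * z₀ + b = z₀ := by
    have h1c : (1 - c) ≠ 0 := sub_ne_zero.mpr hc1.symm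
    rw [hz₀]
    field_simp
    ring
  have key : ∀ n : ℕ, ∀ w : ℂ, f (z₀ + c ^ n * w) = f (z₀ + w) := by
    intro n
    induction n with
    | zero => intro w; simp
    | succ n ih =>
      intro w
      have : z₀ + c ^ (n + 1) * w = c * (z₀ + c ^ n * w) + b := by
        rw [mul_add, add_assoc]
        rw [show c * z₀ + (c * (c ^ n * w) + b) = (c * z₀ + b) + c * (c ^ n * w) by ring]
        rw [hfix]; ring
      rw [this, haut, ih]
  refine ⟨f z₀, fun w => ?_⟩
  have htend : Filter.Tendsto (fun n : ℕ => z₀ + c ^ n * (w - z₀)) Filter.atTop (nhds z₀) := by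
    have h0 : Filter.Tendsto (fun n : ℕ => c ^ n) Filter.atTop (nhds 0) :=
      tendsto_pow_atTop_nhds_zero_of_norm_lt_one hlt
    have := ((h0.mul_const (w - z₀)).const_add z₀)
    simpa using this
  have hcont : Continuous f := hf.continuous
  have h1 : Filter.Tendsto (fun n : ℕ => f (z₀ + c ^ n * (w - z₀))) Filter.atTop (nhds (f z₀)) :=
    (hcont.tendsto z₀).comp htend
  have h2 : (fun n : ℕ => f (z₀ + c ^ n * (w - z₀))) = fun _ => f w := by
    funext n; rw [key n (w - z₀)]; ring_nf
  rw [h2] at h1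
  exact tendsto_nhds_unique tendsto_const_nhds h1

/-- An affine automorphic map `φ z = c z + b` of a non-constant entire function
has `|c| = 1`. -/
theorem stmt18 (f : ℂ → ℂ) (hf : Differentiable ℂ f)
    (hnc : ¬ ∃ C : ℂ, ∀ w, f w = C)
    (c b : ℂ) (hc0 : c ≠ 0)
    (haut : ∀ z : ℂ, f (c * z + b) = f z) :
    ‖c‖ = 1 := by
  rcases lt_trichotomy (‖c‖) 1 with h | h | h
  · exact absurd (aux18 f hf c b h haut) hnc
  · exact h
  · exfalso
    apply hnc
    have hlt : ‖c⁻¹‖ < 1 := by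
      rw [norm_inv]
      rw [inv_lt_one_iff₀]
      right; exact h
    refine aux18 f hf c⁻¹ (-b / c) hlt ?_
    intro z
    have := haut (c⁻¹ * z + -b / c)
    rw [show c * (c⁻¹ * z + -b / c) + b = z by field_simp; ring] at this
    exact this.symm
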